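/- arXiv:1505.05335 — 3 statements merged into one kernel-verified Lean document; each statement's English description precedes it below -/
import Mathlib

section
/- Let A be an n×n real matrix, P symmetric positive semidefinite with AᵀP + PA + CᵀC negative semidefinite, and let x solve x' = Ax with x(0) = x₀. Then for every T ≥ 0, ∫₀ᵀ ‖C x(τ)‖² dτ ≤ x₀ᵀ P x₀. -/
open Matrix

lemma hasDerivAt_quadform {n : ℕ} (P : Matrix (Fin n) (Fin n) ℝ)
    (x : ℝ → Fin n → ℝ) (v : Fin n → ℝ) (t : ℝ)
    (hx : HasDerivAt x v t) :
    HasDerivAt (fun s => x s ⬝ᵥ P.mulVec (x s))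
      (v ⬝ᵥ P.mulVec (x t) + x t ⬝ᵥ P.mulVec v) t := by
  have hxi : ∀ i, HasDerivAt (fun s => x s i) (v i) t := by
    intro i
    exact (hasDerivAt_pi.mp hx) i
  have h1 : ∀ i, HasDerivAt (fun s => ∑ j, P i j * x s j) (∑ j, P i j * v j) t := by
    intro i
    exact HasDerivAt.fun_sum fun j _ => (hxi j).const_mul (P i j)
  have h2 : HasDerivAt (fun s => ∑ i, x s i * ∑ j, P i j * x s j)
      (∑ i, (v i * ∑ j, P i j * x t j + x t i * ∑ j, P i j * v j)) t :=
    HasDerivAt.fun_sum fun i _ => (hxi i).mul (h1 i)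
  have e1 : (fun s => x s ⬝ᵥ P.mulVec (x s)) = fun s => ∑ i, x s i * ∑ j, P i j * x s j := by
    funext s; simp [dotProduct, mulVec]
  have e2 : v ⬝ᵥ P.mulVec (x t) + x t ⬝ᵥ P.mulVec v
      = ∑ i, (v i * ∑ j, P i j * x t j + x t i * ∑ j, P i j * v j) := by
    simp [dotProduct, mulVec, Finset.sum_add_distrib]
  rw [e1, e2]; exact h2

/-- Integrated Lyapunov dissipation: ∫₀ᵀ ‖Cx(τ)‖² dτ ≤ x₀ᵀ P x₀. -/
theorem lyapunov_output_energy_bound {n p : ℕ}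
    (A P : Matrix (Fin n) (Fin n) ℝ) (C : Matrix (Fin p) (Fin n) ℝ)
    (hP : P.PosSemidef)
    (hLyap : (-(Aᵀ * P + P * A + Cᵀ * C)).PosSemidef)
    (x : ℝ → Fin n → ℝ) (x₀ : Fin n → ℝ)
    (hx : ∀ t, HasDerivAt x (A.mulVec (x t)) t)
    (hx0 : x 0 = x₀) :
    ∀ T, 0 ≤ T →
      ∫ τ in (0:ℝ)..T, (C.mulVec (x τ)) ⬝ᵥ (C.mulVec (x τ)) ≤ x₀ ⬝ᵥ P.mulVec x₀ := by
  intro T hT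
  set V : ℝ → ℝ := fun t => x t ⬝ᵥ P.mulVec (x t) with hVdef
  set dV : ℝ → ℝ := fun t =>
    A.mulVec (x t) ⬝ᵥ P.mulVec (x t) + x t ⬝ᵥ P.mulVec (A.mulVec (x t)) with hdVdef
  have hV : ∀ t, HasDerivAt V (dV t) t := fun t =>
    hasDerivAt_quadform P x _ t (hx t)
  have hcx : Continuous x := by
    refine continuous_iff_continuousAt.mpr fun t => (hx t).continuousAt
  have hcAx : Continuous fun t => A.mulVec (x t) :=
    continuous_const.matrix_mulVec hcx
  have hcdV : Continuous dV := by
    exact (hcAx.dotProduct (continuous_const.matrix_mulVec hcx)).add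
      (hcx.dotProduct (continuous_const.matrix_mulVec hcAx))
  have hcg : Continuous fun t => (C.mulVec (x t)) ⬝ᵥ (C.mulVec (x t)) := by
    have := continuous_const.matrix_mulVec hcx (A := fun _ : ℝ => C)
    exact this.dotProduct this
  -- key pointwise inequality
  have hkey : ∀ t, (C.mulVec (x t)) ⬝ᵥ (C.mulVec (x t)) ≤ -dV t := by
    intro t
    have h0 := hLyap.dotProduct_mulVec_nonneg (x t)
    simp only [star_trivial] at h0
    have hexp : x t ⬝ᵥ (-(Aᵀ * P + P * A + Cᵀ * C)).mulVec (x t)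
        = -(dV t + (C.mulVec (x t)) ⬝ᵥ (C.mulVec (x t))) := by
      have e1 : x t ⬝ᵥ (Aᵀ * P).mulVec (x t) = A.mulVec (x t) ⬝ᵥ P.mulVec (x t) := by
        rw [← mulVec_mulVec, dotProduct_mulVec, vecMul_transpose]
      have e2 : x t ⬝ᵥ (P * A).mulVec (x t) = x t ⬝ᵥ P.mulVec (A.mulVec (x t)) := by
        rw [← mulVec_mulVec]
      have e3 : x t ⬝ᵥ (Cᵀ * C).mulVec (x t) = C.mulVec (x t) ⬝ᵥ C.mulVec (x t) := by
        rw [← mulVec_mulVec, dotProduct_mulVec, vecMul_transpose]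
      simp only [neg_mulVec, dotProduct_neg, add_mulVec, dotProduct_add, e1, e2, e3]
      rfl
    rw [hexp] at h0
    linarith
  have hVnonneg : ∀ t, 0 ≤ V t := by
    intro t
    have := hP.dotProduct_mulVec_nonneg (x t)
    simpa using this
  have hig : IntervalIntegrable (fun t => (C.mulVec (x t)) ⬝ᵥ (C.mulVec (x t)))
      MeasureTheory.volume 0 T := hcg.intervalIntegrable 0 T
  have hidV : IntervalIntegrable (fun t => -dV t) MeasureTheory.volume 0 T :=
    (hcdV.neg).intervalIntegrable 0 T
  have hmono : ∫ τ in (0:ℝ)..T, (C.mulVec (x τ)) ⬝ᵥ (C.mulVec (x τ))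
      ≤ ∫ τ in (0:ℝ)..T, -dV τ := by
    apply intervalIntegral.integral_mono_on hT hig hidV
    intro t _
    exact hkey t
  have hFTC : ∫ τ in (0:ℝ)..T, dV τ = V T - V 0 := by
    apply intervalIntegral.integral_eq_sub_of_hasDerivAt
    · intro t _; exact hV t
    · exact hcdV.intervalIntegrable 0 T
  have : ∫ τ in (0:ℝ)..T, -dV τ = V 0 - V T := by
    rw [intervalIntegral.integral_neg, hFTC]; ring
  rw [this] at hmono
  have hV0 : V 0 = x₀ ⬝ᵥ P.mulVec x₀ := by rw [hVdef]; simp [hx0]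
  have := hVnonneg T
  linarith [hmono, hV0 ▸ (by linarith : V 0 - V T ≤ V 0)]
end

section
/- Let A, P, C be as above with AᵀP + PA + CᵀC ≤ 0, P symmetric positive semidefinite, and additionally P ≤ q·I for some q ≥ 0. Then for every initial condition x₀ and every T ≥ 0, ∫₀ᵀ ‖C e^{Aτ} x₀‖² dτ ≤ q‖x₀‖². -/
open Matrix

attribute [local instance] Matrix.linftyOpNormedAddCommGroup Matrix.linftyOpNormedRing
  Matrix.linftyOpNormedAlgebra

private lemma cont_dot {k : ℕ} {u v : ℝ → (Fin k → ℝ)} (hu : Continuous u) (hv : Continuous v) :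
    Continuous fun τ => u τ ⬝ᵥ v τ := by
  simp only [dotProduct]
  exact continuous_finset_sum _ fun i _ =>
    ((continuous_apply i).comp hu).mul ((continuous_apply i).comp hv)

/-- Parameterised state-to-output gain bound: with AᵀP+PA+CᵀC ⪯ 0 and P ⪯ qI,
∫₀ᵀ ‖C e^{Aτ} x₀‖² dτ ≤ q‖x₀‖². -/
theorem state_to_output_gain_bound {n p : ℕ}
    (A P : Matrix (Fin n) (Fin n) ℝ) (C : Matrix (Fin p) (Fin n) ℝ)
    (q : ℝ) (hq : 0 ≤ q)
    (hP : P.PosSemidef)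
    (hLyap : (-(Aᵀ * P + P * A + Cᵀ * C)).PosSemidef)
    (hPq : (q • (1 : Matrix (Fin n) (Fin n) ℝ) - P).PosSemidef) :
    ∀ (x₀ : Fin n → ℝ) (T : ℝ), 0 ≤ T →
      ∫ τ in (0:ℝ)..T,
        (C.mulVec ((NormedSpace.exp (τ • A)).mulVec x₀)) ⬝ᵥ
          (C.mulVec ((NormedSpace.exp (τ • A)).mulVec x₀))
        ≤ q * (x₀ ⬝ᵥ x₀) := by
  intro x₀ T hT
  set f : ℝ → (Fin n → ℝ) := fun τ => (NormedSpace.exp (τ • A)).mulVec x₀ with hfdef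
  -- the trajectory solves x' = A x
  have hfd : ∀ τ : ℝ, HasDerivAt f (A.mulVec (f τ)) τ := by
    intro τ
    have h1 : HasDerivAt (fun t : ℝ => NormedSpace.exp (t • A))
        (A * NormedSpace.exp (τ • A)) τ := hasDerivAt_exp_smul_const' A τ
    let L : Matrix (Fin n) (Fin n) ℝ →ₗ[ℝ] (Fin n → ℝ) :=
      { toFun := fun M => M.mulVec x₀
        map_add' := fun M N => Matrix.add_mulVec M N x₀
        map_smul' := fun c M => M.smul_mulVec c x₀ }
    have h2 := (L.toContinuousLinearMap.hasFDerivAt.comp_hasDerivAt τ h1)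
    simpa [L, Matrix.mulVec_mulVec, f] using (show HasDerivAt (fun t : ℝ => (NormedSpace.exp (t • A)).mulVec x₀)
      ((A * NormedSpace.exp (τ • A)).mulVec x₀) τ from h2)
  have hfc : Continuous f := by
    rw [continuous_iff_continuousAt]; exact fun τ => (hfd τ).continuousAt
  set g : ℝ → ℝ := fun τ => f τ ⬝ᵥ P.mulVec (f τ) with hgdef
  set D : ℝ → ℝ := fun τ =>
    A.mulVec (f τ) ⬝ᵥ P.mulVec (f τ) + f τ ⬝ᵥ P.mulVec (A.mulVec (f τ)) with hDdef
  set h : ℝ → ℝ := fun τ => (C.mulVec (f τ)) ⬝ᵥ (C.mulVec (f τ)) with hhdef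
  have hgd : ∀ τ : ℝ, HasDerivAt g (D τ) τ := by
    intro τ
    have hcomp : ∀ i, HasDerivAt (fun t => f t i) (A.mulVec (f τ) i) τ :=
      fun i => hasDerivAt_pi.1 (hfd τ) i
    have : HasDerivAt (fun t => ∑ i, f t i * ∑ j, P i j * f t j)
        (∑ i, (A.mulVec (f τ) i * ∑ j, P i j * f τ j
          + f τ i * ∑ j, P i j * A.mulVec (f τ) j)) τ := by
      refine HasDerivAt.fun_sum fun i _ => (hcomp i).mul (HasDerivAt.fun_sum fun j _ => ?_)
      exact (hcomp j).const_mul (P i j)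
    simpa [g, D, dotProduct, mulVec, Finset.sum_add_distrib] using this
  -- dissipation inequality : D τ ≤ - h τ
  have hdiss : ∀ τ : ℝ, D τ ≤ - h τ := by
    intro τ
    have h0 := hLyap.dotProduct_mulVec_nonneg (f τ)
    simp only [star_trivial, Matrix.neg_mulVec, Matrix.add_mulVec, dotProduct_neg,
      dotProduct_add, ← Matrix.mulVec_mulVec] at h0
    have e1 : f τ ⬝ᵥ Aᵀ.mulVec (P.mulVec (f τ)) = A.mulVec (f τ) ⬝ᵥ P.mulVec (f τ) := by
      rw [Matrix.dotProduct_mulVec, Matrix.vecMul_transpose]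
    have e2 : f τ ⬝ᵥ Cᵀ.mulVec (C.mulVec (f τ)) = C.mulVec (f τ) ⬝ᵥ C.mulVec (f τ) := by
      rw [Matrix.dotProduct_mulVec, Matrix.vecMul_transpose]
    simp only [e1, e2] at h0
    simp only [D, h]
    linarith
  -- continuity / integrability
  have hAfc : Continuous fun τ => A.mulVec (f τ) :=
    (Matrix.mulVecLin A).continuous_of_finiteDimensional.comp hfc
  have hPfc : Continuous fun τ => P.mulVec (f τ) :=
    (Matrix.mulVecLin P).continuous_of_finiteDimensional.comp hfc
  have hPAfc : Continuous fun τ => P.mulVec (A.mulVec (f τ)) :=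
    (Matrix.mulVecLin P).continuous_of_finiteDimensional.comp hAfc
  have hCfc : Continuous fun τ => C.mulVec (f τ) :=
    (Matrix.mulVecLin C).continuous_of_finiteDimensional.comp hfc
  have hDc : Continuous D := (cont_dot hAfc hPfc).add (cont_dot hfc hPAfc)
  have hhc : Continuous h := cont_dot hCfc hCfc
  have hIntD : IntervalIntegrable D MeasureTheory.volume 0 T :=
    hDc.intervalIntegrable 0 T
  have hInth : IntervalIntegrable h MeasureTheory.volume 0 T :=
    hhc.intervalIntegrable 0 T
  have hFTC : ∫ τ in (0:ℝ)..T, D τ = g T - g 0 :=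
    intervalIntegral.integral_eq_sub_of_hasDerivAt (fun τ _ => hgd τ) hIntD
  have hmono : ∫ τ in (0:ℝ)..T, h τ ≤ ∫ τ in (0:ℝ)..T, (-D τ) :=
    intervalIntegral.integral_mono_on hT hInth hIntD.neg
      (fun τ _ => by have := hdiss τ; linarith)
  have hnegD : ∫ τ in (0:ℝ)..T, (-D τ) = g 0 - g T := by
    rw [intervalIntegral.integral_neg, hFTC]; ring
  -- endpoint bounds
  have hgT : 0 ≤ g T := by simpa using hP.dotProduct_mulVec_nonneg (f T)
  have hg0 : g 0 ≤ q * (x₀ ⬝ᵥ x₀) := by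
    have h0 := hPq.dotProduct_mulVec_nonneg x₀
    have hf0 : f 0 = x₀ := by simp [f]
    simp only [star_trivial, Matrix.sub_mulVec, Matrix.smul_mulVec,
      Matrix.one_mulVec, dotProduct_sub, dotProduct_smul, smul_eq_mul] at h0
    simp only [g, hf0]
    linarith
  calc ∫ τ in (0:ℝ)..T, h τ ≤ g 0 - g T := by rw [← hnegD]; exact hmono
    _ ≤ q * (x₀ ⬝ᵥ x₀) := by linarith
end

section
/- Let A be an n×n real Hurwitz matrix (all eigenvalues have negative real part), B ∈ ℝ^{n×m}, C ∈ ℝ^{p×n}, and suppose P is symmetric positive semidefinite with AᵀP + PA + CᵀC ≤ 0 and P ≤ qI for some q ≥ 0. Then ∑_{i=1}^{m} ∫₀^∞ ‖C e^{Aτ} B_i‖² dτ ≤ q · Tr(BᵀB), where B_i denotes the i-th column of B. -/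
open Matrix MeasureTheory Set Filter

attribute [local instance] Matrix.linftyOpNormedRing Matrix.linftyOpNormedAlgebra

lemma dot_transpose_mulVec {n p : ℕ} (M : Matrix (Fin p) (Fin n) ℝ) (x : Fin n → ℝ)
    (y : Fin p → ℝ) : x ⬝ᵥ (Mᵀ *ᵥ y) = (M *ᵥ x) ⬝ᵥ y := by
  rw [Matrix.dotProduct_mulVec, Matrix.vecMul_transpose, dotProduct_comm]

lemma hasDerivAt_dot {n : ℕ} {f g : ℝ → (Fin n → ℝ)} {f' g' : Fin n → ℝ} {t : ℝ}
    (hf : HasDerivAt f f' t) (hg : HasDerivAt g g' t) :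
    HasDerivAt (fun τ => f τ ⬝ᵥ g τ) (f' ⬝ᵥ g t + f t ⬝ᵥ g') t := by
  have h : ∀ i : Fin n, HasDerivAt (fun τ => f τ i * g τ i)
      (f' i * g t i + f t i * g' i) t := fun i =>
    ((hasDerivAt_pi.1 hf) i).mul ((hasDerivAt_pi.1 hg) i)
  have := HasDerivAt.fun_sum (fun i (_ : i ∈ Finset.univ) => h i)
  simpa [dotProduct, Finset.sum_add_distrib] using this

lemma continuous_dotProd {n : ℕ} {f g : ℝ → Fin n → ℝ} (hf : Continuous f)
    (hg : Continuous g) : Continuous fun τ => f τ ⬝ᵥ g τ := by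
  simp only [dotProduct]
  exact continuous_finset_sum _ fun i _ =>
    ((continuous_apply i).comp hf).mul ((continuous_apply i).comp hg)

lemma key {n p : ℕ} (A P : Matrix (Fin n) (Fin n) ℝ) (C : Matrix (Fin p) (Fin n) ℝ)
    (q : ℝ) (hq : 0 ≤ q) (hP : P.PosSemidef)
    (hLyap : (-(Aᵀ * P + P * A + Cᵀ * C)).PosSemidef)
    (hPq : (q • (1 : Matrix (Fin n) (Fin n) ℝ) - P).PosSemidef)
    (b : Fin n → ℝ) :
    ∫ τ in Set.Ioi (0:ℝ),
        (C.mulVec ((NormedSpace.exp (τ • A)).mulVec b)) ⬝ᵥ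
          (C.mulVec ((NormedSpace.exp (τ • A)).mulVec b)) ≤ q * (b ⬝ᵥ b) := by
  classical
  set x : ℝ → (Fin n → ℝ) := fun τ => (NormedSpace.exp (τ • A)) *ᵥ b with hxdef
  have hM : ∀ t : ℝ, HasDerivAt (fun τ : ℝ => NormedSpace.exp (τ • A))
      (A * NormedSpace.exp (t • A)) t := fun t => hasDerivAt_exp_smul_const' A t
  let L : Matrix (Fin n) (Fin n) ℝ →ₗ[ℝ] (Fin n → ℝ) :=
    { toFun := fun M => M *ᵥ b
      map_add' := fun M N => Matrix.add_mulVec M N b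
      map_smul' := fun c M => Matrix.smul_mulVec c M b }
  have hx : ∀ t : ℝ, HasDerivAt x (A *ᵥ x t) t := by
    intro t
    have := (L.toContinuousLinearMap.hasFDerivAt.comp_hasDerivAt t (hM t))
    simp only [hxdef, Matrix.mulVec_mulVec]
    exact this
  have hxc : Continuous x := by
    rw [continuous_iff_continuousAt]; exact fun t => (hx t).continuousAt
  set f : ℝ → ℝ := fun τ => x τ ⬝ᵥ (P *ᵥ x τ) with hfdef
  set g : ℝ → ℝ := fun τ => (A *ᵥ x τ) ⬝ᵥ (P *ᵥ x τ) + x τ ⬝ᵥ (P *ᵥ (A *ᵥ x τ)) with hgdef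
  set h : ℝ → ℝ := fun τ => (C *ᵥ x τ) ⬝ᵥ (C *ᵥ x τ) with hhdef
  have hPx : ∀ t : ℝ, HasDerivAt (fun τ => P *ᵥ x τ) (P *ᵥ (A *ᵥ x t)) t := fun t =>
    (Matrix.mulVecLin P).toContinuousLinearMap.hasFDerivAt.comp_hasDerivAt t (hx t)
  have hf : ∀ t : ℝ, HasDerivAt f (g t) t := fun t => hasDerivAt_dot (hx t) (hPx t)
  have hAxc : Continuous fun τ => A *ᵥ x τ :=
    (Matrix.mulVecLin A).toContinuousLinearMap.continuous.comp hxc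
  have hPxc : Continuous fun τ => P *ᵥ x τ :=
    (Matrix.mulVecLin P).toContinuousLinearMap.continuous.comp hxc
  have hPAxc : Continuous fun τ => P *ᵥ (A *ᵥ x τ) :=
    (Matrix.mulVecLin P).toContinuousLinearMap.continuous.comp hAxc
  have hCxc : Continuous fun τ => C *ᵥ x τ :=
    (Matrix.mulVecLin C).toContinuousLinearMap.continuous.comp hxc
  have hgc : Continuous g :=
    (continuous_dotProd hAxc hPxc).add (continuous_dotProd hxc hPAxc)
  have hhc : Continuous h := continuous_dotProd hCxc hCxc
  have hpt : ∀ t : ℝ, h t + g t ≤ 0 := by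
    intro t
    have h0 := hLyap.dotProduct_mulVec_nonneg (x t)
    simp only [star_trivial, Matrix.neg_mulVec, Matrix.add_mulVec, dotProduct_neg,
      dotProduct_add, ← Matrix.mulVec_mulVec, dot_transpose_mulVec] at h0
    simp only [hhdef, hgdef]
    linarith
  have hbT : ∀ T : ℝ, 0 ≤ T → ∫ τ in (0:ℝ)..T, h τ ≤ q * (b ⬝ᵥ b) := by
    intro T hT
    have hih : IntervalIntegrable h volume 0 T := hhc.intervalIntegrable 0 T
    have hig : IntervalIntegrable g volume 0 T := hgc.intervalIntegrable 0 T
    have hftc : ∫ τ in (0:ℝ)..T, g τ = f T - f 0 :=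
      intervalIntegral.integral_eq_sub_of_hasDerivAt (fun t _ => hf t) hig
    have h1 : 0 ≤ ∫ τ in (0:ℝ)..T, -(h τ + g τ) :=
      intervalIntegral.integral_nonneg hT (fun u _ => by linarith [hpt u])
    rw [intervalIntegral.integral_neg] at h1
    have h1' : ∫ τ in (0:ℝ)..T, (h τ + g τ) ≤ 0 := by linarith
    rw [intervalIntegral.integral_add hih hig, hftc] at h1'
    have hfT : 0 ≤ f T := by simpa using hP.dotProduct_mulVec_nonneg (x T)
    have hf0 : f 0 ≤ q * (b ⬝ᵥ b) := by
      have h2 := hPq.dotProduct_mulVec_nonneg b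
      have hx0 : x 0 = b := by simp [hxdef]
      simp only [star_trivial, Matrix.sub_mulVec, Matrix.smul_mulVec,
        Matrix.one_mulVec, dotProduct_sub, dotProduct_smul, smul_eq_mul] at h2
      simp only [hfdef, hx0]
      linarith
    linarith [h1']
  have hnn : ∀ t : ℝ, 0 ≤ h t := fun t =>
    Finset.sum_nonneg fun i _ => mul_self_nonneg _
  have hnormint : ∀ T : ℝ, 0 ≤ T → ∫ τ in (0:ℝ)..T, ‖h τ‖ ≤ q * (b ⬝ᵥ b) := by
    intro T hT
    calc ∫ τ in (0:ℝ)..T, ‖h τ‖ = ∫ τ in (0:ℝ)..T, h τ := by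
          apply intervalIntegral.integral_congr
          intro τ _; exact Real.norm_of_nonneg (hnn τ)
      _ ≤ q * (b ⬝ᵥ b) := hbT T hT
  have hint : IntegrableOn h (Ioi (0:ℝ)) :=
    MeasureTheory.integrableOn_Ioi_of_intervalIntegral_norm_bounded (q * (b ⬝ᵥ b)) 0
      (fun T : ℝ => hhc.integrableOn_Ioc) tendsto_id
      ((eventually_ge_atTop (0:ℝ)).mono fun T hT => hnormint T hT)
  have hlim := MeasureTheory.intervalIntegral_tendsto_integral_Ioi 0 hint tendsto_id
  exact le_of_tendsto hlim ((eventually_ge_atTop (0:ℝ)).mono fun T hT => hbT T hT)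

/-- H₂-norm bound: for Hurwitz A with AᵀP+PA+CᵀC ⪯ 0 and P ⪯ qI,
∑ᵢ ∫₀^∞ ‖C e^{Aτ} Bᵢ‖² dτ ≤ q · Tr(BᵀB). -/
theorem h2_norm_bound {n m p : ℕ}
    (A P : Matrix (Fin n) (Fin n) ℝ) (B : Matrix (Fin n) (Fin m) ℝ)
    (C : Matrix (Fin p) (Fin n) ℝ) (q : ℝ) (hq : 0 ≤ q)
    (hHurwitz : ∀ μ ∈ spectrum ℂ (A.map (Complex.ofReal)), μ.re < 0)
    (hP : P.PosSemidef)
    (hLyap : (-(Aᵀ * P + P * A + Cᵀ * C)).PosSemidef)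
    (hPq : (q • (1 : Matrix (Fin n) (Fin n) ℝ) - P).PosSemidef) :
    ∑ i : Fin m,
      ∫ τ in Set.Ioi (0:ℝ),
        (C.mulVec ((NormedSpace.exp (τ • A)).mulVec (fun j => B j i))) ⬝ᵥ
          (C.mulVec ((NormedSpace.exp (τ • A)).mulVec (fun j => B j i)))
      ≤ q * (Bᵀ * B).trace := by
  calc ∑ i : Fin m,
      ∫ τ in Set.Ioi (0:ℝ),
        (C.mulVec ((NormedSpace.exp (τ • A)).mulVec (fun j => B j i))) ⬝ᵥ
          (C.mulVec ((NormedSpace.exp (τ • A)).mulVec (fun j => B j i)))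
      ≤ ∑ i : Fin m, q * ((fun j => B j i) ⬝ᵥ (fun j => B j i)) :=
        Finset.sum_le_sum fun i _ => key A P C q hq hP hLyap hPq (fun j => B j i)
    _ = q * (Bᵀ * B).trace := by
        rw [← Finset.mul_sum]
        congr 1
end
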